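/- Let A, B be integral commutative lattice-ordered monoids (unit 1 of * is the lattice top), let M, N be finite many-valued structures over A, B respectively with truth filters {1_A}, {1_B}, and let g : M → N be a protomorphism. Then every existential-positive sentence ψ = ⋁ᵢ ∃x̄ ⋀ⱼ ∏ₖ R_{j,k}(x̄_{j,k}) (disjunction of ∧-*-primitive sentences) satisfies: the value of ψ in M equals 1_A implies the value of ψ in N equals 1_B. -/

import Mathlib

/-- The truth value of an existential-positive sentence
`⋁_{j} ∃x̄ ⋀_{i} ∏_{k} R_{j,i,k}(x̄_{j,i,k})` (disjunction of ∧-*-primitive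
sentences) in a finite many-valued structure over a lattice-ordered commutative
monoid: join over disjuncts and assignments, meet over conjuncts, monoid product
over the factors of each conjunct. -/
def epProdValue {A : Type*} [Lattice A] [CommMonoid A] {σ : Type*} (ar : σ → ℕ)
    {X : Type*} [Fintype X] [Nonempty X]
    (d : ℕ) (hd : 0 < d) (nv nc : Fin d → ℕ) (hnc : ∀ j, 0 < nc j)
    (np : ∀ j : Fin d, Fin (nc j) → ℕ)
    (sym : ∀ (j : Fin d) (i : Fin (nc j)), Fin (np j i) → σ)
    (args : ∀ (j : Fin d) (i : Fin (nc j)) (k : Fin (np j i)),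
      Fin (ar (sym j i k)) → Fin (nv j))
    (rel : ∀ s : σ, (Fin (ar s) → X) → A) : A :=
  haveI : Nonempty (Fin d) := Fin.pos_iff_nonempty.mp hd
  Finset.univ.sup' Finset.univ_nonempty fun j =>
    haveI : Nonempty (Fin (nc j)) := Fin.pos_iff_nonempty.mp (hnc j)
    Finset.univ.sup' Finset.univ_nonempty fun mbar : Fin (nv j) → X =>
      Finset.univ.inf' Finset.univ_nonempty fun i =>
        ∏ k : Fin (np j i), rel (sym j i k) fun l => mbar (args j i k l)


section Aux

lemma sup'_eq_one_iff_exists {A : Type*} [Lattice A] [One A] {ι : Type*} (s : Finset ι)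
    (hs : s.Nonempty) (f : ι → A)
    (hprime : ∀ a b : A, a ⊔ b = 1 → a = 1 ∨ b = 1)
    (hint : ∀ a : A, a ≤ 1) :
    s.sup' hs f = 1 → ∃ i ∈ s, f i = 1 := by
  induction hs using Finset.Nonempty.cons_induction with
  | singleton i => intro h; exact ⟨i, Finset.mem_singleton_self i, by simpa using h⟩
  | cons i s hi hs ih =>
      intro h
      rw [Finset.sup'_cons hs] at h
      rcases hprime _ _ h with h1 | h1
      · exact ⟨i, Finset.mem_cons_self i s, h1⟩
      · obtain ⟨j, hj, hj1⟩ := ih h1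
        exact ⟨j, Finset.mem_cons_of_mem hj, hj1⟩

lemma prod_factor_eq_one {A : Type*} [CommMonoid A] [Lattice A]
    [CovariantClass A A (· * ·) (· ≤ ·)]
    (hint : ∀ a : A, a ≤ 1) {ι : Type*} (s : Finset ι) (f : ι → A)
    (h : ∏ k ∈ s, f k = 1) {i : ι} (hi : i ∈ s) : f i = 1 := by
  classical
  have h1 : (∏ k ∈ s, f k) ≤ f i := by
    rw [← Finset.mul_prod_erase s f hi]
    calc f i * ∏ k ∈ s.erase i, f k ≤ f i * 1 :=
          mul_le_mul_right (hint _) _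
      _ = f i := mul_one _
  rw [h] at h1
  exact le_antisymm (hint _) h1

end Aux

/-- Let `A`, `B` be integral commutative lattice-ordered monoids whose truth filter
`{1}` is prime with respect to `⊔`, `M`, `N` finite structures over `A`, `B`, and
`g : M → N` a protomorphism (atomic facts with value `1_A` map to value `1_B`).
Then every existential-positive sentence whose value in `M` is `1_A` has value
`1_B` in `N`. -/
theorem protomorphism_preserves_existential_positive_integral
    {A : Type*} [Lattice A] [CommMonoid A] [CovariantClass A A (· * ·) (· ≤ ·)]
    (hAint : ∀ a : A, a ≤ 1)
    (hAprime : ∀ a b : A, a ⊔ b = 1 → a = 1 ∨ b = 1)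
    {B : Type*} [Lattice B] [CommMonoid B] [CovariantClass B B (· * ·) (· ≤ ·)]
    (hBint : ∀ b : B, b ≤ 1)
    (hBprime : ∀ a b : B, a ⊔ b = 1 → a = 1 ∨ b = 1)
    {σ : Type*} (ar : σ → ℕ)
    {M : Type*} [Fintype M] [Nonempty M]
    {N : Type*} [Fintype N] [Nonempty N]
    (relM : ∀ s : σ, (Fin (ar s) → M) → A)
    (relN : ∀ s : σ, (Fin (ar s) → N) → B)
    (g : M → N)
    (hproto : ∀ (s : σ) (mbar : Fin (ar s) → M), relM s mbar = 1 → relN s (g ∘ mbar) = 1)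
    (d : ℕ) (hd : 0 < d) (nv nc : Fin d → ℕ) (hnc : ∀ j, 0 < nc j)
    (np : ∀ j : Fin d, Fin (nc j) → ℕ)
    (sym : ∀ (j : Fin d) (i : Fin (nc j)), Fin (np j i) → σ)
    (args : ∀ (j : Fin d) (i : Fin (nc j)) (k : Fin (np j i)),
      Fin (ar (sym j i k)) → Fin (nv j)) :
    epProdValue ar d hd nv nc hnc np sym args relM = 1 →
      epProdValue ar d hd nv nc hnc np sym args relN = 1 := by
  intro h
  unfold epProdValue at h ⊢
  haveI : Nonempty (Fin d) := Fin.pos_iff_nonempty.mp hd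
  obtain ⟨j, -, hj⟩ := sup'_eq_one_iff_exists _ _ _ hAprime hAint h
  haveI : Nonempty (Fin (nc j)) := Fin.pos_iff_nonempty.mp (hnc j)
  obtain ⟨mbar, -, hmbar⟩ := sup'_eq_one_iff_exists _ _ _ hAprime hAint hj
  have hconj : ∀ i : Fin (nc j),
      (∏ k : Fin (np j i), relM (sym j i k) fun l => mbar (args j i k l)) = 1 := by
    intro i
    have h1 : (1 : A) ≤ _ := hmbar ▸ Finset.inf'_le _ (Finset.mem_univ i)
    exact le_antisymm (hAint _) h1
  have hfac : ∀ (i : Fin (nc j)) (k : Fin (np j i)),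
      relN (sym j i k) (g ∘ fun l => mbar (args j i k l)) = 1 := by
    intro i k
    exact hproto _ _ (prod_factor_eq_one hAint _ _ (hconj i) (Finset.mem_univ k))
  apply le_antisymm
  · apply Finset.sup'_le
    intro j' _
    apply Finset.sup'_le
    intro nbar _
    exact le_trans (Finset.inf'_le _ (Finset.mem_univ ⟨0, hnc j'⟩)) (hBint _)
  · apply le_trans ?_ (Finset.le_sup' _ (Finset.mem_univ j))
    apply le_trans ?_ (Finset.le_sup' _ (Finset.mem_univ (g ∘ mbar)))
    apply Finset.le_inf'
    intro i _
    have : (∏ k : Fin (np j i), relN (sym j i k) fun l => (g ∘ mbar) (args j i k l)) = 1 := by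
      apply Finset.prod_eq_one
      intro k _
      exact hfac i k
    rw [this]
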